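/- If ℓ is a chord of arclength t ≥ 1/3 (with t ≤ 1/2), then the length of σ_2(ℓ) is at most the length of ℓ; if t < 1/3 and t > 0, then the length of σ_2(ℓ) is strictly greater than t. Consequently, any σ_2-invariant geodesic lamination containing a non-degenerate leaf contains a leaf of length at least 1/3. -/

import Mathlib

/-- `x` lies in the open positively oriented arc from `a` to `b` on `ℝ/ℤ`. -/
def inOpenArc (a b x : AddCircle (1 : ℝ)) : Prop :=
  ∃ u v : ℝ, 0 < u ∧ u < v ∧ v < 1 ∧ b = a + ((v : ℝ) : AddCircle (1 : ℝ)) ∧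
    x = a + ((u : ℝ) : AddCircle (1 : ℝ))

/-- Two chords `ab` and `cd` are linked iff exactly one of `c`, `d` lies in the
open arc `(a,b)`. -/
def Linked (a b c d : AddCircle (1 : ℝ)) : Prop :=
  Xor' (inOpenArc a b c) (inOpenArc a b d)

/-- A (sibling) σ₂-invariant geodesic lamination, leaves encoded as symmetric
pairs of endpoints. -/
structure InvLam where
  leaves : Set (AddCircle (1 : ℝ) × AddCircle (1 : ℝ))
  symm : ∀ a b, (a, b) ∈ leaves → (b, a) ∈ leaves
  degenerate : ∀ a, (a, a) ∈ leaves
  closed : IsClosed leaves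
  unlinked : ∀ a b c d, (a, b) ∈ leaves → (c, d) ∈ leaves → ¬ Linked a b c d
  forward : ∀ a b, (a, b) ∈ leaves → (2 • a, 2 • b) ∈ leaves
  backward : ∀ a b, (a, b) ∈ leaves → ∃ a' b', (a', b') ∈ leaves ∧ 2 • a' = a ∧ 2 • b' = b

lemma round_key (u : ℝ) (hu : |u| ≤ 1) : |u - round u| = min |u| (1 - |u|) := by
  have hu1 : -1 ≤ u := neg_le_of_abs_le hu
  have hu2 : u ≤ 1 := le_of_abs_le hu
  refine le_antisymm (le_min ?_ ?_) ?_
  · simpa using round_le u 0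
  · rcases le_or_gt 0 u with h | h
    · have h2 := round_le u 1
      push_cast at h2
      have h3 : |u - (1:ℝ)| = 1 - u := by rw [abs_of_nonpos (by linarith)]; ring
      rw [h3] at h2
      rw [abs_of_nonneg h]
      linarith
    · have h2 := round_le u (-1)
      push_cast at h2
      have h3 : |u - (-1:ℝ)| = 1 + u := by rw [abs_of_nonneg (by linarith)]; ring
      rw [h3] at h2
      rw [abs_of_neg h]
      linarith
  · rcases eq_or_ne (round u) 0 with h | h
    · rw [h]
      simpa using min_le_left |u| (1 - |u|)
    · have h1 : (1:ℝ) ≤ |(round u : ℝ)| := by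
        have := Int.one_le_abs h
        exact_mod_cast this
      have h2 : |(round u : ℝ)| - |u| ≤ |u - round u| := by
        rw [abs_sub_comm]
        linarith [abs_sub_abs_le_abs_sub (round u : ℝ) u]
      exact le_trans (min_le_right _ _) (by linarith)

lemma norm_two_smul (x : AddCircle (1:ℝ)) :
    ‖2 • x‖ = min (2 * ‖x‖) (1 - 2 * ‖x‖) := by
  induction x using QuotientAddGroup.induction_on with
  | H r =>
  have hsm : (2 • (r : AddCircle (1:ℝ))) = ((2 * r : ℝ) : AddCircle (1:ℝ)) := by
    rw [two_smul, ← AddCircle.coe_add]; congr 1; ring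
  have hnorm : ∀ s : ℝ, ‖((s : ℝ) : AddCircle (1:ℝ))‖ = |s - round s| := by
    intro s
    rw [AddCircle.norm_eq]
    norm_num
  rw [hsm, hnorm, hnorm]
  set s := r - round r with hs
  have habs : |s| ≤ 1/2 := abs_sub_round r
  have h2r : |2*r - round (2*r)| = |2*s - round (2*s)| := by
    have h4 : (2:ℝ)*r = 2*s + ((2 * round r : ℤ) : ℝ) := by push_cast [hs]; ring
    rw [h4, round_add_intCast]
    push_cast
    ring_nf
  rw [h2r, round_key (2*s) (by rw [abs_mul]; norm_num; linarith)]
  have : |2*s| = 2 * |s| := by rw [abs_mul]; norm_num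
  rw [this]

lemma dist_two_smul (a b : AddCircle (1:ℝ)) :
    dist (2 • a) (2 • b) = min (2 * dist a b) (1 - 2 * dist a b) := by
  rw [dist_eq_norm, dist_eq_norm, ← smul_sub, norm_two_smul]

/-- A chord of length `≥ 1/3` does not get longer under σ₂; a chord of
length `0 < t < 1/3` gets strictly longer. Consequently, any σ₂-invariant geodesic
lamination containing a non-degenerate leaf contains a leaf of length at least `1/3`. -/
theorem stmt4 :
    (∀ a b : AddCircle (1 : ℝ), 1/3 ≤ dist a b → dist (2 • a) (2 • b) ≤ dist a b) ∧
    (∀ a b : AddCircle (1 : ℝ), 0 < dist a b → dist a b < 1/3 →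
      dist a b < dist (2 • a) (2 • b)) ∧
    (∀ L : InvLam, (∃ a b, (a, b) ∈ L.leaves ∧ a ≠ b) →
      ∃ a b, (a, b) ∈ L.leaves ∧ 1/3 ≤ dist a b) := by
  refine ⟨fun a b h => ?_, fun a b h0 h3 => ?_, fun L ⟨a, b, hab, hne⟩ => ?_⟩
  · rw [dist_two_smul]
    exact le_trans (min_le_right _ _) (by linarith)
  · rw [dist_two_smul]
    exact lt_min (by linarith) (by linarith)
  · set f : AddCircle (1:ℝ) × AddCircle (1:ℝ) → AddCircle (1:ℝ) × AddCircle (1:ℝ) :=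
      fun P => (2 • P.1, 2 • P.2) with hf
    set t := dist a b with ht
    have ht0 : 0 < t := dist_pos.mpr hne
    have hmem : ∀ n, f^[n] (a, b) ∈ L.leaves := by
      intro n
      induction n with
      | zero => simpa using hab
      | succ n ih =>
        rw [Function.iterate_succ_apply']
        have := L.forward (f^[n] (a,b)).1 (f^[n] (a,b)).2 (by simpa using ih)
        simpa [hf] using this
    have key : ∀ n : ℕ, (∃ p q, (p, q) ∈ L.leaves ∧ 1/3 ≤ dist p q) ∨
        (2:ℝ)^n * t ≤ dist (f^[n] (a, b)).1 (f^[n] (a, b)).2 := by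
      intro n
      induction n with
      | zero => right; simp [ht]
      | succ n ih =>
        rcases ih with h | h
        · exact Or.inl h
        set P := f^[n] (a, b) with hP
        set d := dist P.1 P.2 with hd
        by_cases h13 : 1/3 ≤ d
        · exact Or.inl ⟨P.1, P.2, by simpa using hmem n, h13⟩
        push_neg at h13
        have hstep : dist (f^[n+1] (a,b)).1 (f^[n+1] (a,b)).2 = min (2*d) (1-2*d) := by
          rw [Function.iterate_succ_apply', ← hP, hf]
          exact dist_two_smul P.1 P.2
        rcases le_or_gt (1 - 2*d) (2*d) with hc | hc
        · left
          refine ⟨(f^[n+1] (a,b)).1, (f^[n+1] (a,b)).2, by simpa using hmem (n+1), ?_⟩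
          rw [hstep, min_eq_right hc]
          linarith
        · right
          rw [hstep, min_eq_left hc.le]
          have : (2:ℝ)^(n+1) * t = 2 * ((2:ℝ)^n * t) := by ring
          rw [this]
          linarith
    obtain ⟨n, hn⟩ := pow_unbounded_of_one_lt (1/(3*t)) (one_lt_two (α := ℝ))
    rcases key n with h | h
    · exact h
    · refine ⟨(f^[n] (a,b)).1, (f^[n] (a,b)).2, by simpa using hmem n, ?_⟩
      have h1 : 1/3 ≤ (2:ℝ)^n * t := by
        rw [div_lt_iff₀ (by positivity)] at hn
        nlinarith
      linarith
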